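/- For every 2D grid function ω in W_h one has (4/9)·‖ω‖ ≤ ‖ℋω‖ ≤ ‖ω‖. -/
import Mathlib


open Finset

noncomputable section

/-- spatial mesh size `1/(2J)` -/
def msh (J : ℕ) : ℝ := 1 / (2 * (J : ℝ))

/-- 2D discrete inner product -/
def gridIP2 (J₁ J₂ : ℕ) (ω ν : ℕ → ℕ → ℝ) : ℝ :=
  msh J₁ * msh J₂ *
    ∑ i ∈ Finset.Icc 1 (2 * J₁ - 1), ∑ j ∈ Finset.Icc 1 (2 * J₂ - 1), ω i j * ν i j

/-- 2D discrete `L²` norm -/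
def gridNorm2 (J₁ J₂ : ℕ) (ω : ℕ → ℕ → ℝ) : ℝ :=
  Real.sqrt (gridIP2 J₁ J₂ ω ω)

/-- the 2D norm `‖ω‖_E` -/
def gridNormE (J₁ J₂ : ℕ) (ω : ℕ → ℕ → ℝ) : ℝ :=
  2 / 3 * Real.sqrt (msh J₁ * msh J₂ *
    ∑ i ∈ Finset.Icc 1 J₁, ∑ j ∈ Finset.Icc 1 J₂,
      (ω (2 * i - 2) (2 * j - 1) ^ 2 + ω (2 * i - 1) (2 * j - 2) ^ 2
        + 3 * ω (2 * i - 1) (2 * j - 1) ^ 2))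

/-- the 2D norm `‖ω‖_F = √((4/9)‖ω‖² + ‖ω‖_E²)` -/
def gridNormF (J₁ J₂ : ℕ) (ω : ℕ → ℕ → ℝ) : ℝ :=
  Real.sqrt (4 / 9 * gridNorm2 J₁ J₂ ω ^ 2 + gridNormE J₁ J₂ ω ^ 2)

/-- compact operator `𝒜` in the `x`-direction (interior formula) -/
def cA2 (ω : ℕ → ℕ → ℝ) (i j : ℕ) : ℝ := (ω (i + 1) j + 10 * ω i j + ω (i - 1) j) / 12

/-- compact operator `ℬ` in the `y`-direction (interior formula) -/
def cB2 (ω : ℕ → ℕ → ℝ) (i j : ℕ) : ℝ := (ω i (j + 1) + 10 * ω i j + ω i (j - 1)) / 12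

/-- compact operator `ℋ = 𝒜ℬ` -/
def cH (ω : ℕ → ℕ → ℝ) : ℕ → ℕ → ℝ := cA2 (cB2 ω)

/-- second difference `δ_xδ_x̄` -/
def dxx2 (J₁ : ℕ) (ω : ℕ → ℕ → ℝ) (i j : ℕ) : ℝ :=
  (ω (i + 1) j - 2 * ω i j + ω (i - 1) j) / msh J₁ ^ 2

/-- second difference `δ_yδ_ȳ` -/
def dyy2 (J₂ : ℕ) (ω : ℕ → ℕ → ℝ) (i j : ℕ) : ℝ :=
  (ω i (j + 1) - 2 * ω i j + ω i (j - 1)) / msh J₂ ^ 2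

/-- compact discrete Laplacian `Φ = ℬδ_xδ_x̄ + 𝒜δ_yδ_ȳ` -/
def cPhi (J₁ J₂ : ℕ) (ω : ℕ → ℕ → ℝ) (i j : ℕ) : ℝ :=
  cB2 (dxx2 J₁ ω) i j + cA2 (dyy2 J₂ ω) i j

/-- membership in `W_h`: vanishing on the boundary indices -/
def memWh (J₁ J₂ : ℕ) (ω : ℕ → ℕ → ℝ) : Prop :=
  ∀ i j : ℕ, (i = 0 ∨ i = 2 * J₁ ∨ j = 0 ∨ j = 2 * J₂) → ω i j = 0

lemma key_sum (a : ℕ → ℝ) (N : ℕ) :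
    ∑ i ∈ Finset.Icc 1 N, a i * (a (i+1) + 2*a i + a (i-1)) =
      ∑ i ∈ Finset.range (N+1), (a i + a (i+1))^2
        - a 0^2 - a 0 * a 1 - a (N+1)^2 - a N * a (N+1) := by
  induction N with
  | zero => simp [Finset.sum_range_succ]; ring
  | succ N ih =>
      rw [Finset.sum_Icc_succ_top (by omega), ih,
        Finset.sum_range_succ (f := fun i => (a i + a (i+1))^2) (n := N+1)]
      simp only [Nat.add_sub_cancel]
      ring

lemma shift_up (f : ℕ → ℝ) (m : ℕ) :
    ∑ i ∈ Finset.Icc 1 (m+1), f (i+1) = ∑ i ∈ Finset.Icc 2 (m+2), f i := by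
  induction m with
  | zero => simp
  | succ m ih =>
      rw [Finset.sum_Icc_succ_top (by omega), ih,
        Finset.sum_Icc_succ_top (by omega : 2 ≤ m+1+2)]

lemma shift_down (f : ℕ → ℝ) (m : ℕ) :
    ∑ i ∈ Finset.Icc 1 (m+1), f (i-1) = ∑ i ∈ Finset.Icc 0 m, f i := by
  induction m with
  | zero => simp
  | succ m ih =>
      rw [Finset.sum_Icc_succ_top (by omega), ih,
        Finset.sum_Icc_succ_top (by omega : 0 ≤ m+1)]
      simp

lemma oneD_upper (m : ℕ) (a : ℕ → ℝ) (h0 : a 0 = 0) (hn : a (m+2) = 0) :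
    ∑ i ∈ Finset.Icc 1 (m+1), ((a (i+1) + 10 * a i + a (i-1))/12)^2
      ≤ ∑ i ∈ Finset.Icc 1 (m+1), a i ^ 2 := by
  have h1 : ∑ i ∈ Finset.Icc 1 (m+1), a (i+1)^2 ≤ ∑ i ∈ Finset.Icc 1 (m+1), a i^2 := by
    rw [shift_up (fun i => a i ^ 2), Finset.sum_Icc_succ_top (by omega), hn]
    simp only [ne_eq, OfNat.ofNat_ne_zero, not_false_eq_true, zero_pow, add_zero]
    apply Finset.sum_le_sum_of_subset_of_nonneg
    · intro x hx; simp only [Finset.mem_Icc] at *; omega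
    · intros; positivity
  have h2 : ∑ i ∈ Finset.Icc 1 (m+1), a (i-1)^2 ≤ ∑ i ∈ Finset.Icc 1 (m+1), a i^2 := by
    rw [shift_down (fun i => a i ^ 2)]
    have : ∑ i ∈ Finset.Icc 0 m, a i ^ 2 = ∑ i ∈ Finset.Icc 1 m, a i ^ 2 := by
      refine (Finset.sum_subset ?_ ?_).symm
      · intro x hx; simp only [Finset.mem_Icc] at *; omega
      · intro x hx hx'; simp only [Finset.mem_Icc] at *
        have : x = 0 := by omega
        simp [this, h0]
    rw [this]
    apply Finset.sum_le_sum_of_subset_of_nonneg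
    · intro x hx; simp only [Finset.mem_Icc] at *; omega
    · intros; positivity
  have hpt : ∀ i ∈ Finset.Icc 1 (m+1),
      ((a (i+1) + 10 * a i + a (i-1))/12)^2
        ≤ (a (i+1)^2 + 10 * a i ^2 + a (i-1)^2)/12 := by
    intro i _
    nlinarith [sq_nonneg (a (i+1) - a i), sq_nonneg (a (i-1) - a i),
      sq_nonneg (a (i+1) - a (i-1))]
  calc ∑ i ∈ Finset.Icc 1 (m+1), ((a (i+1) + 10 * a i + a (i-1))/12)^2
      ≤ ∑ i ∈ Finset.Icc 1 (m+1), (a (i+1)^2 + 10 * a i ^2 + a (i-1)^2)/12 :=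
        Finset.sum_le_sum hpt
    _ = (∑ i ∈ Finset.Icc 1 (m+1), a (i+1)^2 + 10 * ∑ i ∈ Finset.Icc 1 (m+1), a i ^2
          + ∑ i ∈ Finset.Icc 1 (m+1), a (i-1)^2)/12 := by
        rw [Finset.mul_sum, ← Finset.sum_add_distrib, ← Finset.sum_add_distrib,
          ← Finset.sum_div]
    _ ≤ ∑ i ∈ Finset.Icc 1 (m+1), a i ^ 2 := by linarith

lemma oneD_lower (m : ℕ) (a : ℕ → ℝ) (h0 : a 0 = 0) (hn : a (m+2) = 0) :
    4/9 * ∑ i ∈ Finset.Icc 1 (m+1), a i ^ 2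
      ≤ ∑ i ∈ Finset.Icc 1 (m+1), ((a (i+1) + 10 * a i + a (i-1))/12)^2 := by
  have hT : ∑ i ∈ Finset.Icc 1 (m+1), a i * (a (i+1) + 2*a i + a (i-1))
      = ∑ i ∈ Finset.range (m+2), (a i + a (i+1))^2 := by
    rw [key_sum, h0, hn]; ring
  have hTnn : 0 ≤ ∑ i ∈ Finset.Icc 1 (m+1), a i * (a (i+1) + 2*a i + a (i-1)) := by
    rw [hT]; positivity
  have hbnn : (0:ℝ) ≤ ∑ i ∈ Finset.Icc 1 (m+1), ((a (i+1) + 2*a i + a (i-1))/12)^2 := by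
    positivity
  have hsum : ∑ i ∈ Finset.Icc 1 (m+1), ((a (i+1) + 10 * a i + a (i-1))/12)^2
      = 4/9 * ∑ i ∈ Finset.Icc 1 (m+1), a i ^ 2
        + 1/9 * ∑ i ∈ Finset.Icc 1 (m+1), a i * (a (i+1) + 2*a i + a (i-1))
        + ∑ i ∈ Finset.Icc 1 (m+1), ((a (i+1) + 2*a i + a (i-1))/12)^2 := by
    rw [Finset.mul_sum, Finset.mul_sum, ← Finset.sum_add_distrib, ← Finset.sum_add_distrib]
    apply Finset.sum_congr rfl; intros; ring
  linarith

lemma twoD_A (m : ℕ) (s : Finset ℕ) (ν : ℕ → ℕ → ℝ)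
    (h0 : ∀ j, ν 0 j = 0) (hn : ∀ j, ν (m+2) j = 0) :
    4/9 * (∑ i ∈ Finset.Icc 1 (m+1), ∑ j ∈ s, ν i j ^ 2)
        ≤ (∑ i ∈ Finset.Icc 1 (m+1), ∑ j ∈ s, cA2 ν i j ^ 2) ∧
      (∑ i ∈ Finset.Icc 1 (m+1), ∑ j ∈ s, cA2 ν i j ^ 2)
        ≤ ∑ i ∈ Finset.Icc 1 (m+1), ∑ j ∈ s, ν i j ^ 2 := by
  rw [Finset.sum_comm (f := fun i j => ν i j ^ 2),
      Finset.sum_comm (f := fun i j => cA2 ν i j ^ 2)]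
  simp only [cA2]
  constructor
  · rw [Finset.mul_sum]
    exact Finset.sum_le_sum fun j _ => oneD_lower m (fun i => ν i j) (h0 j) (hn j)
  · exact Finset.sum_le_sum fun j _ => oneD_upper m (fun i => ν i j) (h0 j) (hn j)

lemma twoD_B (m : ℕ) (s : Finset ℕ) (ν : ℕ → ℕ → ℝ)
    (h0 : ∀ i, ν i 0 = 0) (hn : ∀ i, ν i (m+2) = 0) :
    4/9 * (∑ i ∈ s, ∑ j ∈ Finset.Icc 1 (m+1), ν i j ^ 2)
        ≤ (∑ i ∈ s, ∑ j ∈ Finset.Icc 1 (m+1), cB2 ν i j ^ 2) ∧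
      (∑ i ∈ s, ∑ j ∈ Finset.Icc 1 (m+1), cB2 ν i j ^ 2)
        ≤ ∑ i ∈ s, ∑ j ∈ Finset.Icc 1 (m+1), ν i j ^ 2 := by
  simp only [cB2]
  constructor
  · rw [Finset.mul_sum]
    exact Finset.sum_le_sum fun i _ => oneD_lower m (fun j => ν i j) (h0 i) (hn i)
  · exact Finset.sum_le_sum fun i _ => oneD_upper m (fun j => ν i j) (h0 i) (hn i)

/-- For every 2D grid function `ω ∈ W_h`, `(4/9)‖ω‖ ≤ ‖ℋω‖ ≤ ‖ω‖`. -/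
theorem stmt_13 (J₁ J₂ : ℕ) (hJ₁ : 0 < J₁) (hJ₂ : 0 < J₂)
    (ω : ℕ → ℕ → ℝ) (hω : memWh J₁ J₂ ω) :
    4 / 9 * gridNorm2 J₁ J₂ ω ≤ gridNorm2 J₁ J₂ (cH ω) ∧
      gridNorm2 J₁ J₂ (cH ω) ≤ gridNorm2 J₁ J₂ ω := by
  obtain ⟨m₁, hm₁⟩ : ∃ m, 2*J₁ = m+2 := ⟨2*J₁-2, by omega⟩
  obtain ⟨m₂, hm₂⟩ : ∃ m, 2*J₂ = m+2 := ⟨2*J₂-2, by omega⟩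
  have e1 : 2*J₁-1 = m₁+1 := by omega
  have e2 : 2*J₂-1 = m₂+1 := by omega
  set S : (ℕ → ℕ → ℝ) → ℝ :=
    fun f => ∑ i ∈ Finset.Icc 1 (m₁+1), ∑ j ∈ Finset.Icc 1 (m₂+1), f i j ^ 2 with hS
  have hB0 : ∀ i, ω i 0 = 0 := fun i => hω i 0 (by tauto)
  have hBn : ∀ i, ω i (m₂+2) = 0 := fun i => hω i (m₂+2) (by omega)
  have hz0 : ∀ j, ω 0 j = 0 := fun j => hω 0 j (by tauto)
  have hzn : ∀ j, ω (m₁+2) j = 0 := fun j => hω (m₁+2) j (by omega)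
  have hA0 : ∀ j, cB2 ω 0 j = 0 := by intro j; simp [cB2, hz0]
  have hAn : ∀ j, cB2 ω (m₁+2) j = 0 := by intro j; simp [cB2, hzn]
  have hBpair := twoD_B m₂ (Finset.Icc 1 (m₁+1)) ω hB0 hBn
  have hApair := twoD_A m₁ (Finset.Icc 1 (m₂+1)) (cB2 ω) hA0 hAn
  have key1 : 16/81 * S ω ≤ S (cH ω) := by
    have := hApair.1
    have := hBpair.1
    simp only [hS, cH]
    nlinarith [hApair.1, hBpair.1]
  have key2 : S (cH ω) ≤ S ω := by
    have h1 := hApair.2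
    have h2 := hBpair.2
    simp only [hS, cH]
    linarith
  have Snn : 0 ≤ S ω := by positivity
  have hmJ1 : 0 < msh J₁ := by
    have : (0:ℝ) < (J₁:ℝ) := by exact_mod_cast hJ₁
    rw [msh]; positivity
  have hmJ2 : 0 < msh J₂ := by
    have : (0:ℝ) < (J₂:ℝ) := by exact_mod_cast hJ₂
    rw [msh]; positivity
  have hc : 0 < msh J₁ * msh J₂ := mul_pos hmJ1 hmJ2
  have ipEq : ∀ f : ℕ → ℕ → ℝ, gridIP2 J₁ J₂ f f = msh J₁ * msh J₂ * S f := by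
    intro f
    rw [gridIP2, e1, e2, hS]
    congr 1
    exact Finset.sum_congr rfl fun i _ => Finset.sum_congr rfl fun j _ => (sq (f i j)).symm ▸ (by ring)
  constructor
  · rw [gridNorm2, gridNorm2, ipEq, ipEq]
    have h49 : 4/9 * Real.sqrt (msh J₁ * msh J₂ * S ω)
        = Real.sqrt (16/81 * (msh J₁ * msh J₂ * S ω)) := by
      have hq : Real.sqrt (16/81 : ℝ) = 4/9 := by
        rw [show (16:ℝ)/81 = (4/9)^2 by norm_num]
        exact Real.sqrt_sq (by norm_num)
      rw [Real.sqrt_mul (by norm_num : (0:ℝ) ≤ 16/81), hq]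
    rw [h49]
    apply Real.sqrt_le_sqrt
    have := mul_le_mul_of_nonneg_left key1 hc.le
    nlinarith
  · rw [gridNorm2, gridNorm2, ipEq, ipEq]
    apply Real.sqrt_le_sqrt
    exact mul_le_mul_of_nonneg_left key2 hc.le
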